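/- (Theorem 1, residual formula) With the notation of Lemma 1, the residual R_j = P_N f − f̃ (the difference between the orthogonal projections of f onto V_N and onto Ṽ = span{α_n : n ≠ j}) equals c_j β_j / ‖β_j‖², and hence ‖R_j‖² = |c_j|² / ‖β_j‖². -/

import Mathlib

open scoped InnerProductSpace
open Finset

theorem boomp_stmt6 {H : Type*} [NormedAddCommGroup H] [InnerProductSpace ℂ H]
    {N : ℕ} (α β : Fin N → H) (j : Fin N) (f : H)
    (hli : LinearIndependent ℂ α)
    (hβmem : ∀ m, β m ∈ Submodule.span ℂ (Set.range α))
    (hbi : ∀ n m, ⟪α n, β m⟫_ℂ = if n = m then 1 else 0) :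
    (∑ n, ⟪β n, f⟫_ℂ • α n) -
        (∑ n ∈ Finset.univ.erase j,
          (⟪β n, f⟫_ℂ - ⟪β j, f⟫_ℂ * ⟪β n, β j⟫_ℂ / (‖β j‖ : ℂ) ^ 2) • α n)
      = (⟪β j, f⟫_ℂ / (‖β j‖ : ℂ) ^ 2) • β j ∧
    ‖(∑ n, ⟪β n, f⟫_ℂ • α n) -
        (∑ n ∈ Finset.univ.erase j,
          (⟪β n, f⟫_ℂ - ⟪β j, f⟫_ℂ * ⟪β n, β j⟫_ℂ / (‖β j‖ : ℂ) ^ 2) • α n)‖ ^ 2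
      = ‖⟪β j, f⟫_ℂ‖ ^ 2 / ‖β j‖ ^ 2 := by
  -- β j is nonzero
  have hβj0 : β j ≠ 0 := by
    intro h
    have := hbi j j
    rw [h, inner_zero_right, if_pos rfl] at this
    exact one_ne_zero this.symm
  have hn0 : (‖β j‖ : ℂ) ^ 2 ≠ 0 := by
    have : (‖β j‖ : ℂ) ≠ 0 := by exact_mod_cast norm_ne_zero_iff.mpr hβj0
    exact pow_ne_zero 2 this
  -- expansion of β j in basis α
  have hexp : β j = ∑ n, ⟪β n, β j⟫_ℂ • α n := by
    obtain ⟨t, ht⟩ := (Finsupp.mem_span_range_iff_exists_finsupp).mp (hβmem j)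
    have hcoef : ∀ m, ⟪β m, β j⟫_ℂ = t m := by
      intro m
      rw [← ht]
      rw [Finsupp.sum_fintype _ _ (by simp)]
      rw [inner_sum]
      have h1 : ∀ n, ⟪β m, t n • α n⟫_ℂ = t n * (if n = m then 1 else 0) := by
        intro n
        rw [inner_smul_right]
        congr 1
        have h2 := hbi n m
        calc ⟪β m, α n⟫_ℂ = (starRingEnd ℂ) ⟪α n, β m⟫_ℂ := (inner_conj_symm _ _).symm
          _ = _ := by rw [h2]; split <;> simp
      simp only [h1, mul_ite, mul_one, mul_zero]
      simp
    refine ((Finset.sum_congr rfl (fun n _ => by rw [hcoef])).trans ?_).symm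
    rw [← ht, Finsupp.sum_fintype _ _ (by simp)]
  have hnorm : ⟪β j, β j⟫_ℂ = (‖β j‖ : ℂ) ^ 2 := by
    rw [inner_self_eq_norm_sq_to_K]; norm_cast
  -- main algebraic identity
  have key : (∑ n, ⟪β n, f⟫_ℂ • α n) -
        (∑ n ∈ Finset.univ.erase j,
          (⟪β n, f⟫_ℂ - ⟪β j, f⟫_ℂ * ⟪β n, β j⟫_ℂ / (‖β j‖ : ℂ) ^ 2) • α n)
      = (⟪β j, f⟫_ℂ / (‖β j‖ : ℂ) ^ 2) • β j := by
    have hsmul : ∀ c : ℂ, c • β j = ∑ n, c • ⟪β n, β j⟫_ℂ • α n := by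
      intro c
      conv_lhs => rw [hexp]
      rw [Finset.smul_sum]
    rw [hsmul]
    rw [← Finset.sum_erase_add _ (fun n => ⟪β n, f⟫_ℂ • α n) (Finset.mem_univ j)]
    rw [← Finset.sum_erase_add _
      (fun n => (⟪β j, f⟫_ℂ / (‖β j‖ : ℂ) ^ 2) • ⟪β n, β j⟫_ℂ • α n) (Finset.mem_univ j)]
    have h1 : ∀ n ∈ Finset.univ.erase j,
        ⟪β n, f⟫_ℂ • α n - (⟪β n, f⟫_ℂ - ⟪β j, f⟫_ℂ * ⟪β n, β j⟫_ℂ / (‖β j‖ : ℂ) ^ 2) • α n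
        = (⟪β j, f⟫_ℂ / (‖β j‖ : ℂ) ^ 2) • ⟪β n, β j⟫_ℂ • α n := by
      intro n _
      rw [← sub_smul, smul_smul]
      congr 1
      field_simp
      ring
    have h2 : (⟪β j, f⟫_ℂ / (‖β j‖ : ℂ) ^ 2) • ⟪β j, β j⟫_ℂ • α j = ⟪β j, f⟫_ℂ • α j := by
      rw [smul_smul, hnorm, div_mul_eq_mul_div, mul_div_assoc, div_self hn0, mul_one]
    rw [h2, ← Finset.sum_congr rfl h1, Finset.sum_sub_distrib]
    abel
  refine ⟨key, ?_⟩
  have hd : ‖((‖β j‖ : ℂ)) ^ 2‖ = ‖β j‖ ^ 2 := by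
    rw [norm_pow, Complex.norm_real, norm_norm]
  rw [key, norm_smul, norm_div, hd, mul_pow, div_pow]
  have hb : (0:ℝ) < ‖β j‖ := norm_pos_iff.mpr hβj0
  field_simp
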